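/- Let (X,d,μ) be a space of homogeneous type satisfying the standing assumptions and 1 ≤ q ≤ α ≤ p ≤ ∞. Then there is a constant C > 0 such that for every r > 0 and every μ-measurable f on X, _r‖f‖_{q,p,α} ≤ C ‖f‖_{L^α}. Consequently, ‖f‖_{q,p,α} := sup_{r>0} _r‖f‖_{q,p,α} ≤ C‖f‖_{L^α}, i.e. L^α(X) embeds continuously into (L^q,L^p)^α(X). -/

import Mathlib

open MeasureTheory Set ENNReal Filter

noncomputable section

variable {X : Type*}

/-- Ball of a quasi-metric `d`, center `x`, radius `r`. -/
def qball (d : X → X → ℝ) (x : X) (r : ℝ) : Set X := {y | d x y < r}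

/-- The amalgam-type quantity `_r‖f‖_{q,p,α}` (with the convention `1/∞ = 0`
given by `ENNReal.toReal`). -/
def amalgamNorm [MeasurableSpace X] (μ : Measure X) (d : X → X → ℝ)
    (q p α : ℝ≥0∞) (r : ℝ) (f : X → ℂ) : ℝ≥0∞ :=
  if p = ∞ then
    ⨆ y : X, μ (qball d y r) ^ (1 / α.toReal - 1 / q.toReal) *
      eLpNorm ((qball d y r).indicator f) q μ
  else
    (∫⁻ y, (μ (qball d y r) ^ (1 / α.toReal - 1 / p.toReal - 1 / q.toReal) *
      eLpNorm ((qball d y r).indicator f) q μ) ^ p.toReal ∂μ) ^ (1 / p.toReal)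

private lemma qball_mono (d : X → X → ℝ) (x : X) {a b : ℝ} (h : a ≤ b) :
    qball d x a ⊆ qball d x b := fun _ hy => lt_of_lt_of_le hy h

/-- auxiliary: `a⁻¹ ≤ K * b⁻¹` from `b ≤ K * a`. -/
private lemma aux_inv_le {a b K : ℝ≥0∞} (hK0 : K ≠ 0) (hKt : K ≠ ⊤)
    (h : b ≤ K * a) : a⁻¹ ≤ K * b⁻¹ := by
  have h1 : K⁻¹ * b ≤ a := by
    calc K⁻¹ * b ≤ K⁻¹ * (K * a) := mul_le_mul_right h _
      _ = (K⁻¹ * K) * a := (mul_assoc _ _ _).symm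
      _ = a := by rw [ENNReal.inv_mul_cancel hK0 hKt, one_mul]
  calc a⁻¹ ≤ (K⁻¹ * b)⁻¹ := ENNReal.inv_le_inv.2 h1
    _ = K * b⁻¹ := by
        rw [ENNReal.mul_inv (Or.inl (ENNReal.inv_ne_zero.2 hKt))
          (Or.inl (ENNReal.inv_ne_top.2 hK0)), inv_inv]

/-- iterated doubling -/
private lemma double_iter [MeasurableSpace X] (μ : Measure X) (d : X → X → ℝ) (C' : ℝ)
    (hdouble : ∀ x r, 0 < r → μ (qball d x (2 * r)) ≤ ENNReal.ofReal C' * μ (qball d x r))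
    (j : ℕ) (z : X) (t : ℝ) (ht : 0 < t) :
    μ (qball d z (2 ^ j * t)) ≤ ENNReal.ofReal C' ^ j * μ (qball d z t) := by
  induction j with
  | zero => simp
  | succ n ih =>
      have h1 : (2:ℝ) ^ (n+1) * t = 2 * (2 ^ n * t) := by ring
      rw [h1]
      calc μ (qball d z (2 * (2 ^ n * t))) ≤ ENNReal.ofReal C' * μ (qball d z (2 ^ n * t)) :=
            hdouble z _ (by positivity)
        _ ≤ ENNReal.ofReal C' * (ENNReal.ofReal C' ^ n * μ (qball d z t)) :=
            mul_le_mul_right ih _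
        _ = ENNReal.ofReal C' ^ (n+1) * μ (qball d z t) := by ring

private lemma double_gen [MeasurableSpace X] (μ : Measure X) (d : X → X → ℝ) (C' : ℝ)
    (hdouble : ∀ x r, 0 < r → μ (qball d x (2 * r)) ≤ ENNReal.ofReal C' * μ (qball d x r))
    (m : ℕ) (z : X) {c t : ℝ} (ht : 0 < t) (hc : c ≤ 2 ^ m) :
    μ (qball d z (c * t)) ≤ ENNReal.ofReal C' ^ m * μ (qball d z t) := by
  refine le_trans (measure_mono (qball_mono d z ?_))
    (double_iter μ d C' hdouble m z t ht)
  exact mul_le_mul_of_nonneg_right hc ht.le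

/-- Hölder step on a set. -/
private lemma holder_step [MeasurableSpace X] (μ : Measure X) {q α : ℝ≥0∞} (hqα : q ≤ α)
    {B : Set X} (hB : MeasurableSet B) {f : X → ℂ} (hf : Measurable f) :
    eLpNorm (B.indicator f) q μ ≤
      μ B ^ (1 / q.toReal - 1 / α.toReal) * eLpNorm (B.indicator f) α μ := by
  rw [eLpNorm_indicator_eq_eLpNorm_restrict hB, eLpNorm_indicator_eq_eLpNorm_restrict hB]
  have h := eLpNorm_le_eLpNorm_mul_rpow_measure_univ (μ := μ.restrict B) hqα
    hf.aestronglyMeasurable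
  rwa [Measure.restrict_apply_univ, mul_comm] at h

/-- Core covering estimate. -/
private lemma core_bound [MeasurableSpace X] (μ : Measure X) (d : X → X → ℝ)
    (κ : ℝ) (hκ : 1 ≤ κ)
    (hsymm : ∀ x y, d x y = d y x)
    (htri : ∀ x y z, d x y ≤ κ * (d x z + d z y))
    (hmeas : ∀ x r, MeasurableSet (qball d x r))
    (hpos : ∀ x r, 0 < r → 0 < μ (qball d x r))
    (hfin : ∀ x r, μ (qball d x r) < ∞)
    (hXinf : μ Set.univ = ∞)
    (hsep : ∃ D : Set X, D.Countable ∧ ∀ x : X, ∀ ε : ℝ, 0 < ε → ∃ y ∈ D, d x y < ε)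
    (C' : ℝ) (hC' : 1 < C')
    (hdouble : ∀ x r, 0 < r → μ (qball d x (2 * r)) ≤ ENNReal.ofReal C' * μ (qball d x r))
    (m : ℕ) (hm : 4 * κ ^ 2 ≤ 2 ^ m)
    (g : X → ℝ≥0∞) (hg : Measurable g) (r : ℝ) (hr : 0 < r) :
    ∫⁻ y, (μ (qball d y r))⁻¹ * ∫⁻ x in qball d y r, g x ∂μ ∂μ ≤
      (ENNReal.ofReal C' ^ m * ENNReal.ofReal C' ^ m) * ∫⁻ x, g x ∂μ := by
  classical
  set K : ℝ≥0∞ := ENNReal.ofReal C' ^ m with hK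
  have hκ0 : (0:ℝ) < κ := lt_of_lt_of_le one_pos hκ
  have hK1 : (1:ℝ≥0∞) ≤ K := one_le_pow_of_one_le' (ENNReal.one_le_ofReal.2 hC'.le) m
  have hK0 : K ≠ 0 := fun h => by simp [h] at hK1
  have hKt : K ≠ ⊤ := pow_ne_top ofReal_ne_top
  -- X nonempty
  rcases isEmpty_or_nonempty X with hX | hX
  · exact absurd hXinf (by simp [Set.univ_eq_empty_iff.2 hX])
  obtain ⟨D, hDc, hDd⟩ := hsep
  have hDne : D.Nonempty := by
    obtain ⟨x⟩ := hX
    obtain ⟨y, hy, -⟩ := hDd x 1 one_pos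
    exact ⟨y, hy⟩
  obtain ⟨e, he⟩ := hDc.exists_eq_range hDne
  set s : ℝ := r / (2 * κ) with hs_def
  have hs : 0 < s := by positivity
  set En : ℕ → Set X := fun n => qball d (e n) s with hEn
  set A : ℕ → Set X := fun n => disjointed En n with hA
  set Bn : ℕ → Set X := fun n => qball d (e n) (2 * κ * r) with hBn
  have hA_meas : ∀ n, MeasurableSet (A n) := MeasurableSet.disjointed (fun n => hmeas _ _)
  have hA_disj : Pairwise (Function.onFun Disjoint A) := disjoint_disjointed En
  have hA_sub : ∀ n, A n ⊆ En n := disjointed_subset En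
  have hcover : ∀ y : X, ∃ n, y ∈ A n := by
    intro y
    have hy : y ∈ ⋃ n, A n := by
      rw [hA, iUnion_disjointed]
      obtain ⟨z, hz, hdz⟩ := hDd y s hs
      rw [he] at hz
      obtain ⟨n, rfl⟩ := hz
      refine mem_iUnion.2 ⟨n, ?_⟩
      show d (e n) y < s
      rw [hsymm]; exact hdz
    exact mem_iUnion.1 hy
  -- geometric inclusions
  have hG1 : ∀ n y, y ∈ En n → qball d y r ⊆ Bn n := by
    intro n y hy x hx
    have h2 : d (e n) y < s := hy
    have h3 : d y x < r := hx
    have hsr : s ≤ r := by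
      rw [hs_def, div_le_iff₀ (by positivity)]; nlinarith
    show d (e n) x < 2 * κ * r
    calc d (e n) x ≤ κ * (d (e n) y + d y x) := htri _ _ _
      _ < κ * (s + r) := by
          apply mul_lt_mul_of_pos_left _ hκ0
          linarith
      _ ≤ 2 * κ * r := by nlinarith
  have hG2 : ∀ n y, y ∈ En n → En n ⊆ qball d y r := by
    intro n y hy x hx
    have h2 : d y (e n) < s := by rw [hsymm]; exact hy
    have h3 : d (e n) x < s := hx
    have h4 : κ * (s + s) = r := by
      rw [hs_def]; field_simp; ring
    show d y x < r
    calc d y x ≤ κ * (d y (e n) + d (e n) x) := htri _ _ _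
      _ < κ * (s + s) := by
          apply mul_lt_mul_of_pos_left _ hκ0
          linarith
      _ = r := h4
  have hG3 : ∀ n x, x ∈ Bn n → En n ⊆ qball d x (3 * κ ^ 2 * r) := by
    intro n x hx w hw
    have h2 : d x (e n) < 2 * κ * r := by rw [hsymm]; exact hx
    have h3 : d (e n) w < s := hw
    have hks : κ * s = r / 2 := by rw [hs_def]; field_simp
    show d x w < 3 * κ ^ 2 * r
    calc d x w ≤ κ * (d x (e n) + d (e n) w) := htri _ _ _
      _ < κ * (2 * κ * r + s) := by
          apply mul_lt_mul_of_pos_left _ hκ0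
          linarith
      _ = 2 * κ ^ 2 * r + κ * s := by ring
      _ = 2 * κ ^ 2 * r + r / 2 := by rw [hks]
      _ ≤ 3 * κ ^ 2 * r := by
          have h5 : r ≤ κ ^ 2 * r := le_mul_of_one_le_left hr.le (by nlinarith)
          linarith
  have hG4 : ∀ n x, x ∈ Bn n → qball d x (3 * κ ^ 2 * r) ⊆ qball d (e n) (5 * κ ^ 3 * r) := by
    intro n x hx w hw
    have h2 : d (e n) x < 2 * κ * r := hx
    have h3 : d x w < 3 * κ ^ 2 * r := hw
    show d (e n) w < 5 * κ ^ 3 * r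
    calc d (e n) w ≤ κ * (d (e n) x + d x w) := htri _ _ _
      _ < κ * (2 * κ * r + 3 * κ ^ 2 * r) := by
          apply mul_lt_mul_of_pos_left _ hκ0
          linarith
      _ = 2 * κ ^ 2 * r + 3 * κ ^ 3 * r := by ring
      _ ≤ 5 * κ ^ 3 * r := by
          have h5 : κ ^ 2 * r ≤ κ ^ 3 * r :=
            mul_le_mul_of_nonneg_right (by nlinarith) hr.le
          linarith
  -- measure estimates
  have hμ1 : ∀ n y, y ∈ En n → μ (Bn n) ≤ K * μ (qball d y r) := by
    intro n y hy
    have h1 : (2:ℝ) * κ * r = 4 * κ ^ 2 * s := by rw [hs_def]; field_simp; ring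
    calc μ (Bn n) = μ (qball d (e n) (4 * κ ^ 2 * s)) := by rw [hBn, h1]
      _ ≤ K * μ (qball d (e n) s) := double_gen μ d C' hdouble m _ hs hm
      _ ≤ K * μ (qball d y r) := mul_le_mul_right (measure_mono (hG2 n y hy)) _
  have hμ2 : ∀ n x, x ∈ Bn n → μ (qball d x (3 * κ ^ 2 * r)) ≤ K * μ (Bn n) := by
    intro n x hx
    have h1 : (5:ℝ) * κ ^ 3 * r = (5 * κ ^ 2 / 2) * (2 * κ * r) := by ring
    calc μ (qball d x (3 * κ ^ 2 * r)) ≤ μ (qball d (e n) (5 * κ ^ 3 * r)) :=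
          measure_mono (hG4 n x hx)
      _ = μ (qball d (e n) ((5 * κ ^ 2 / 2) * (2 * κ * r))) := by rw [h1]
      _ ≤ K * μ (Bn n) := double_gen μ d C' hdouble m _ (by positivity) (by nlinarith)
  -- the majorant H
  set H : X → ℝ≥0∞ := fun y =>
    ∑' n, (A n).indicator (fun _ => K * (μ (Bn n))⁻¹ * ∫⁻ x in Bn n, g x ∂μ) y with hH
  have hFH : ∀ y, (μ (qball d y r))⁻¹ * (∫⁻ x in qball d y r, g x ∂μ) ≤ H y := by
    intro y
    obtain ⟨n, hn⟩ := hcover y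
    have hyE : y ∈ En n := hA_sub n hn
    have hb1 : (μ (qball d y r))⁻¹ ≤ K * (μ (Bn n))⁻¹ :=
      aux_inv_le hK0 hKt (hμ1 n y hyE)
    have hb2 : (∫⁻ x in qball d y r, g x ∂μ) ≤ ∫⁻ x in Bn n, g x ∂μ :=
      lintegral_mono' (Measure.restrict_mono (hG1 n y hyE) le_rfl) le_rfl
    calc (μ (qball d y r))⁻¹ * (∫⁻ x in qball d y r, g x ∂μ)
        ≤ (K * (μ (Bn n))⁻¹) * (∫⁻ x in Bn n, g x ∂μ) := mul_le_mul' hb1 hb2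
      _ = (A n).indicator (fun _ => K * (μ (Bn n))⁻¹ * ∫⁻ x in Bn n, g x ∂μ) y := by
          rw [Set.indicator_of_mem hn]
      _ ≤ H y := ENNReal.le_tsum n
  -- integrate H
  have hHint : ∫⁻ y, H y ∂μ =
      ∑' n, (K * (μ (Bn n))⁻¹ * ∫⁻ x in Bn n, g x ∂μ) * μ (A n) := by
    rw [hH, lintegral_tsum (fun n => (measurable_const.indicator (hA_meas n)).aemeasurable)]
    congr 1
    ext n
    rw [lintegral_indicator_const (hA_meas n)]
  -- rewrite each term as an integral in x
  set T : ℕ → X → ℝ≥0∞ := fun n x =>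
    (Bn n).indicator (fun x => μ (A n) * (μ (Bn n))⁻¹ * g x) x with hT
  have hT_meas : ∀ n, Measurable (T n) :=
    fun n => (hg.const_mul _).indicator (hmeas _ _)
  have hterm : ∀ n, (K * (μ (Bn n))⁻¹ * ∫⁻ x in Bn n, g x ∂μ) * μ (A n) =
      K * ∫⁻ x, T n x ∂μ := by
    intro n
    have hc : μ (A n) * (μ (Bn n))⁻¹ ≠ ⊤ := by
      apply ENNReal.mul_ne_top
      · exact (lt_of_le_of_lt (measure_mono (hA_sub n)) (hfin _ _)).ne
      · exact ENNReal.inv_ne_top.2 (hpos _ _ (by positivity)).ne'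
    rw [hT]
    simp only
    rw [lintegral_indicator (hmeas _ _), lintegral_const_mul' _ _ hc]
    ring
  -- pointwise bound on ∑ T n x
  have hTsum : ∀ x, (∑' n, T n x) ≤ K * g x := by
    intro x
    set R : ℝ := 3 * κ ^ 2 * r with hR
    have hμR0 : μ (qball d x R) ≠ 0 := (hpos x R (by positivity)).ne'
    have hμRt : μ (qball d x R) ≠ ⊤ := (hfin x R).ne
    set A' : ℕ → Set X := fun n => if x ∈ Bn n then A n else ∅ with hA'
    have hA'_meas : ∀ n, MeasurableSet (A' n) := by
      intro n; rw [hA']; dsimp only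
      split
      · exact hA_meas n
      · exact MeasurableSet.empty
    have hA'_sub : ∀ n, A' n ⊆ A n := by
      intro n; rw [hA']; dsimp only
      split
      · exact subset_rfl
      · exact empty_subset _
    have hA'_disj : Pairwise (Function.onFun Disjoint A') := fun i j hij =>
      ((hA_disj hij).mono (hA'_sub i) (hA'_sub j))
    have hA'_union : (⋃ n, A' n) ⊆ qball d x R := by
      refine iUnion_subset fun n => ?_
      rw [hA']; dsimp only
      split
      · next hx => exact fun w hw => hG3 n x hx (hA_sub n hw)
      · exact empty_subset _
    have hsum' : (∑' n, μ (A' n)) ≤ μ (qball d x R) := by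
      rw [← measure_iUnion hA'_disj hA'_meas]
      exact measure_mono hA'_union
    have hptwise : ∀ n, T n x ≤ (K * (μ (qball d x R))⁻¹ * g x) * μ (A' n) := by
      intro n
      by_cases hx : x ∈ Bn n
      · have hb : (μ (Bn n))⁻¹ ≤ K * (μ (qball d x R))⁻¹ :=
          aux_inv_le hK0 hKt (hμ2 n x hx)
        rw [hT]; dsimp only
        rw [Set.indicator_of_mem hx, hA']; dsimp only
        rw [if_pos hx]
        calc μ (A n) * (μ (Bn n))⁻¹ * g x
            ≤ μ (A n) * (K * (μ (qball d x R))⁻¹) * g x := by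
              exact mul_le_mul' (mul_le_mul_right hb _) le_rfl
          _ = (K * (μ (qball d x R))⁻¹ * g x) * μ (A n) := by ring
      · rw [hT]; dsimp only
        rw [Set.indicator_of_notMem hx]
        exact zero_le
    calc (∑' n, T n x) ≤ ∑' n, (K * (μ (qball d x R))⁻¹ * g x) * μ (A' n) :=
          ENNReal.tsum_le_tsum hptwise
      _ = (K * (μ (qball d x R))⁻¹ * g x) * ∑' n, μ (A' n) := by
          simp_rw [mul_comm (K * (μ (qball d x R))⁻¹ * g x) _]
          exact ENNReal.tsum_mul_right ▸ rfl
      _ ≤ (K * (μ (qball d x R))⁻¹ * g x) * μ (qball d x R) := mul_le_mul_right hsum' _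
      _ = K * g x * ((μ (qball d x R))⁻¹ * μ (qball d x R)) := by ring
      _ = K * g x := by rw [ENNReal.inv_mul_cancel hμR0 hμRt, mul_one]
  -- put everything together
  calc ∫⁻ y, (μ (qball d y r))⁻¹ * ∫⁻ x in qball d y r, g x ∂μ ∂μ
      ≤ ∫⁻ y, H y ∂μ := lintegral_mono hFH
    _ = ∑' n, (K * (μ (Bn n))⁻¹ * ∫⁻ x in Bn n, g x ∂μ) * μ (A n) := hHint
    _ = ∑' n, K * ∫⁻ x, T n x ∂μ := by simp_rw [hterm]
    _ = K * ∑' n, ∫⁻ x, T n x ∂μ := ENNReal.tsum_mul_left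
    _ = K * ∫⁻ x, (∑' n, T n x) ∂μ := by
        rw [lintegral_tsum (fun n => (hT_meas n).aemeasurable)]
    _ ≤ K * ∫⁻ x, K * g x ∂μ := mul_le_mul_right (lintegral_mono hTsum) _
    _ = K * (K * ∫⁻ x, g x ∂μ) := by rw [lintegral_const_mul' _ _ hKt]
    _ = (K * K) * ∫⁻ x, g x ∂μ := by rw [mul_assoc]

/-- `L^α(X)` embeds continuously into `(L^q,L^p)^α(X)`. -/
theorem lebesgue_embeds_amalgam [MeasurableSpace X] (μ : Measure X) (d : X → X → ℝ)
    (κ : ℝ) (hκ : 1 ≤ κ)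
    (hsymm : ∀ x y, d x y = d y x) (hd0 : ∀ x, d x x = 0) (hdnn : ∀ x y, 0 ≤ d x y)
    (htri : ∀ x y z, d x y ≤ κ * (d x z + d z y))
    (hmeas : ∀ x r, MeasurableSet (qball d x r))
    (hpos : ∀ x r, 0 < r → 0 < μ (qball d x r))
    (hfin : ∀ x r, μ (qball d x r) < ∞)
    (hXinf : μ Set.univ = ∞)
    (hsep : ∃ D : Set X, D.Countable ∧ ∀ x : X, ∀ ε : ℝ, 0 < ε → ∃ y ∈ D, d x y < ε)
    (hann : ∀ x r R, 0 < r → r < R → (qball d x R \ qball d x r).Nonempty)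
    (C' : ℝ) (hC' : 1 < C')
    (hdouble : ∀ x r, 0 < r → μ (qball d x (2 * r)) ≤ ENNReal.ofReal C' * μ (qball d x r))
    (q p α : ℝ≥0∞) (hq : 1 ≤ q) (hqα : q ≤ α) (hαp : α ≤ p) :
    ∃ C : ℝ, 0 < C ∧
      (∀ (r : ℝ), 0 < r → ∀ (f : X → ℂ), Measurable f →
        amalgamNorm μ d q p α r f ≤ ENNReal.ofReal C * eLpNorm f α μ) ∧
      (∀ (f : X → ℂ), Measurable f →
        (⨆ (r : ℝ) (_ : 0 < r), amalgamNorm μ d q p α r f) ≤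
          ENNReal.ofReal C * eLpNorm f α μ) := by
  have hκ0 : (0:ℝ) < κ := lt_of_lt_of_le one_pos hκ
  obtain ⟨m, hm⟩ := pow_unbounded_of_one_lt (R := ℝ) (4 * κ ^ 2) _root_.one_lt_two
  set K : ℝ≥0∞ := ENNReal.ofReal C' ^ m with hKdef
  set C : ℝ := C' ^ (2 * m) with hC
  have hCpos : 0 < C := by positivity
  have hC1 : 1 ≤ C := one_le_pow₀ hC'.le
  have hCK : ENNReal.ofReal C = K * K := by
    rw [hC, ENNReal.ofReal_pow (by positivity), two_mul, pow_add]
  have key : ∀ (r : ℝ), 0 < r → ∀ (f : X → ℂ), Measurable f →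
      amalgamNorm μ d q p α r f ≤ ENNReal.ofReal C * eLpNorm f α μ := by
    intro r hr f hf
    set M : ℝ≥0∞ := eLpNorm f α μ with hM
    have hCKone : (1:ℝ≥0∞) ≤ ENNReal.ofReal C := ENNReal.one_le_ofReal.2 hC1
    have hball0 : ∀ y : X, μ (qball d y r) ≠ 0 := fun y => (hpos y r hr).ne'
    have hballt : ∀ y : X, μ (qball d y r) ≠ ⊤ := fun y => (hfin y r).ne
    by_cases hp : p = ∞
    · -- sup case
      rw [amalgamNorm, if_pos hp]
      refine iSup_le fun y => ?_
      have hH := holder_step μ hqα (hmeas y r) hf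
      calc μ (qball d y r) ^ (1 / α.toReal - 1 / q.toReal) *
            eLpNorm ((qball d y r).indicator f) q μ
          ≤ μ (qball d y r) ^ (1 / α.toReal - 1 / q.toReal) *
            (μ (qball d y r) ^ (1 / q.toReal - 1 / α.toReal) *
              eLpNorm ((qball d y r).indicator f) α μ) := mul_le_mul_right hH _
        _ = (μ (qball d y r) ^ (1 / α.toReal - 1 / q.toReal) *
              μ (qball d y r) ^ (1 / q.toReal - 1 / α.toReal)) *
            eLpNorm ((qball d y r).indicator f) α μ := (mul_assoc _ _ _).symm
        _ = eLpNorm ((qball d y r).indicator f) α μ := by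
            rw [← ENNReal.rpow_add _ _ (hball0 y) (hballt y)]
            norm_num
        _ ≤ M := eLpNorm_indicator_le f
        _ ≤ ENNReal.ofReal C * M := le_mul_of_one_le_left zero_le hCKone
    · -- integral case
      have hpt : p ≠ ⊤ := hp
      have hα_top : α ≠ ⊤ := fun h => hp (top_le_iff.1 (h ▸ hαp))
      have hq_top : q ≠ ⊤ := fun h => hα_top (top_le_iff.1 (h ▸ hqα))
      have hα0 : α ≠ 0 := fun h => by simp [h] at hqα; simp [hqα] at hq
      have hq0 : q ≠ 0 := fun h => by simp [h] at hq
      have h1p : (1:ℝ) ≤ p.toReal := by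
        rw [← ENNReal.toReal_one]
        exact ENNReal.toReal_mono hpt (le_trans hq (le_trans hqα hαp))
      have h1α : (1:ℝ) ≤ α.toReal := by
        rw [← ENNReal.toReal_one]
        exact ENNReal.toReal_mono hα_top (le_trans hq hqα)
      have hαp' : α.toReal ≤ p.toReal := ENNReal.toReal_mono hpt hαp
      have hptpos : (0:ℝ) < p.toReal := lt_of_lt_of_le one_pos h1p
      have hαtpos : (0:ℝ) < α.toReal := lt_of_lt_of_le one_pos h1α
      rw [amalgamNorm, if_neg hp]
      by_cases hMtop : M = ⊤
      · calc (∫⁻ y, (μ (qball d y r) ^ (1 / α.toReal - 1 / p.toReal - 1 / q.toReal) *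
            eLpNorm ((qball d y r).indicator f) q μ) ^ p.toReal ∂μ) ^ (1 / p.toReal)
            ≤ ⊤ := le_top
          _ = ENNReal.ofReal C * M := by
              rw [hMtop, ENNReal.mul_top]
              exact fun h => by simp [ENNReal.ofReal_eq_zero] at h; linarith
      -- main case
      set g : X → ℝ≥0∞ := fun x => (‖f x‖₊ : ℝ≥0∞) ^ α.toReal with hg_def
      have hg_meas : Measurable g := hf.nnnorm.coe_nnreal_ennreal.pow_const _
      -- eLpNorm of indicator to the α power equals set integral of g
      have hindnorm : ∀ y : X, eLpNorm ((qball d y r).indicator f) α μ ^ α.toReal =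
          ∫⁻ x in qball d y r, g x ∂μ := by
        intro y
        rw [eLpNorm_eq_lintegral_rpow_enorm_toReal hα0 hα_top, ← ENNReal.rpow_mul,
          one_div, inv_mul_cancel₀ hαtpos.ne', ENNReal.rpow_one]
        rw [← lintegral_indicator (hmeas y r)]
        congr 1
        ext x
        by_cases hx : x ∈ qball d y r
        · simp [Set.indicator_of_mem hx, hg_def, enorm_eq_nnnorm]
        · simp [Set.indicator_of_notMem hx, hg_def, enorm_eq_nnnorm,
            ENNReal.zero_rpow_of_pos hαtpos]
      have hMα : M ^ α.toReal = ∫⁻ x, g x ∂μ := by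
        rw [hM, eLpNorm_eq_lintegral_rpow_enorm_toReal hα0 hα_top, ← ENNReal.rpow_mul,
          one_div, inv_mul_cancel₀ hαtpos.ne', ENNReal.rpow_one]
        rfl
      -- pointwise bound of integrand
      have hpoint : ∀ y : X, (μ (qball d y r) ^ (1 / α.toReal - 1 / p.toReal - 1 / q.toReal) *
          eLpNorm ((qball d y r).indicator f) q μ) ^ p.toReal ≤
          M ^ (p.toReal - α.toReal) *
            ((μ (qball d y r))⁻¹ * ∫⁻ x in qball d y r, g x ∂μ) := by
        intro y
        set B := qball d y r
        set a := eLpNorm (B.indicator f) α μ with ha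
        have haM : a ≤ M := eLpNorm_indicator_le f
        have step1 : μ B ^ (1 / α.toReal - 1 / p.toReal - 1 / q.toReal) *
            eLpNorm (B.indicator f) q μ ≤ μ B ^ (-(1 / p.toReal)) * a := by
          calc μ B ^ (1 / α.toReal - 1 / p.toReal - 1 / q.toReal) *
              eLpNorm (B.indicator f) q μ
              ≤ μ B ^ (1 / α.toReal - 1 / p.toReal - 1 / q.toReal) *
                (μ B ^ (1 / q.toReal - 1 / α.toReal) * a) :=
                mul_le_mul_right (holder_step μ hqα (hmeas y r) hf) _
            _ = (μ B ^ (1 / α.toReal - 1 / p.toReal - 1 / q.toReal) *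
                μ B ^ (1 / q.toReal - 1 / α.toReal)) * a := (mul_assoc _ _ _).symm
            _ = μ B ^ (-(1 / p.toReal)) * a := by
                rw [← ENNReal.rpow_add _ _ (hball0 y) (hballt y)]
                ring_nf
                exact mul_comm _ _
        calc (μ B ^ (1 / α.toReal - 1 / p.toReal - 1 / q.toReal) *
            eLpNorm (B.indicator f) q μ) ^ p.toReal
            ≤ (μ B ^ (-(1 / p.toReal)) * a) ^ p.toReal :=
              ENNReal.rpow_le_rpow step1 hptpos.le
          _ = (μ B ^ (-(1 / p.toReal))) ^ p.toReal * a ^ p.toReal :=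
              ENNReal.mul_rpow_of_nonneg _ _ hptpos.le
          _ = (μ B)⁻¹ * a ^ p.toReal := by
              rw [← ENNReal.rpow_mul]
              congr 1
              rw [show -(1 / p.toReal) * p.toReal = -1 by
                field_simp]
              exact ENNReal.rpow_neg_one _
          _ = (μ B)⁻¹ * (a ^ (p.toReal - α.toReal) * a ^ α.toReal) := by
              rw [← ENNReal.rpow_add_of_nonneg _ _ (by linarith) hαtpos.le]
              norm_num
          _ ≤ (μ B)⁻¹ * (M ^ (p.toReal - α.toReal) * a ^ α.toReal) := by
              exact mul_le_mul_right (mul_le_mul'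
                (ENNReal.rpow_le_rpow haM (by linarith)) le_rfl) _
          _ = M ^ (p.toReal - α.toReal) * ((μ B)⁻¹ * a ^ α.toReal) := by ring
          _ = M ^ (p.toReal - α.toReal) *
              ((μ B)⁻¹ * ∫⁻ x in B, g x ∂μ) := by rw [ha, hindnorm y]
      -- integrate
      have hMcoef : M ^ (p.toReal - α.toReal) ≠ ⊤ :=
        ENNReal.rpow_ne_top_of_nonneg (by linarith) hMtop
      have hint : (∫⁻ y, (μ (qball d y r) ^ (1 / α.toReal - 1 / p.toReal - 1 / q.toReal) *
          eLpNorm ((qball d y r).indicator f) q μ) ^ p.toReal ∂μ) ≤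
          (K * K) * M ^ p.toReal := by
        calc (∫⁻ y, (μ (qball d y r) ^ (1 / α.toReal - 1 / p.toReal - 1 / q.toReal) *
            eLpNorm ((qball d y r).indicator f) q μ) ^ p.toReal ∂μ)
            ≤ ∫⁻ y, M ^ (p.toReal - α.toReal) *
              ((μ (qball d y r))⁻¹ * ∫⁻ x in qball d y r, g x ∂μ) ∂μ :=
              lintegral_mono hpoint
          _ = M ^ (p.toReal - α.toReal) *
              ∫⁻ y, (μ (qball d y r))⁻¹ * ∫⁻ x in qball d y r, g x ∂μ ∂μ :=
              lintegral_const_mul' _ _ hMcoef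
          _ ≤ M ^ (p.toReal - α.toReal) * ((K * K) * ∫⁻ x, g x ∂μ) :=
              mul_le_mul_right (core_bound μ d κ hκ hsymm htri hmeas hpos hfin hXinf hsep
                C' hC' hdouble m hm.le g hg_meas r hr) _
          _ = (K * K) * (M ^ (p.toReal - α.toReal) * M ^ α.toReal) := by
              rw [← hMα]; ring
          _ = (K * K) * M ^ p.toReal := by
              rw [← ENNReal.rpow_add_of_nonneg _ _ (by linarith) hαtpos.le]
              norm_num
      calc (∫⁻ y, (μ (qball d y r) ^ (1 / α.toReal - 1 / p.toReal - 1 / q.toReal) *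
          eLpNorm ((qball d y r).indicator f) q μ) ^ p.toReal ∂μ) ^ (1 / p.toReal)
          ≤ ((K * K) * M ^ p.toReal) ^ (1 / p.toReal) :=
            ENNReal.rpow_le_rpow hint (by positivity)
        _ = (K * K) ^ (1 / p.toReal) * M := by
            rw [ENNReal.mul_rpow_of_nonneg _ _ (by positivity), ← ENNReal.rpow_mul,
              mul_one_div, div_self hptpos.ne', ENNReal.rpow_one]
        _ ≤ (K * K) * M := by
            refine mul_le_mul' ?_ le_rfl
            have hKK1 : (1:ℝ≥0∞) ≤ K * K := by
              rw [← hCK]; exact hCKone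
            calc (K * K) ^ (1 / p.toReal) ≤ (K * K) ^ (1:ℝ) :=
                ENNReal.rpow_le_rpow_of_exponent_le hKK1 (by
                  rw [div_le_one hptpos]; exact h1p)
              _ = K * K := ENNReal.rpow_one _
        _ = ENNReal.ofReal C * M := by rw [hCK]
  exact ⟨C, hCpos, key, fun f hf => iSup₂_le fun r hr => key r hr f hf⟩
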